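/- Let F be a finite field, a primitive, n = |F|−1, and suppose d = 2α with d ≤ n−1 and gcd(n,α)=1. Let Ḡ be the α×n matrix with (i,j)-entry a^{ij} (1 ≤ i ≤ α, 0 ≤ j ≤ n−1) and Δ = diag(a^{0·α}, …, a^{(n−1)α}). Then the row space of the stacked matrix G = [Ḡ; ḠΔ] equals the [n, 2α] Reed–Solomon code C_{0d}, the cyclic code with generator polynomial ∏_{i=0}^{n−d−1}(x−a^i). -/

import Mathlib

private lemma aux_geom_zero {F : Type*} [Field F] {z : F} {n : ℕ}
    (hz : z ^ n = 1) (h1 : z ≠ 1) : ∑ ℓ ∈ Finset.range n, z ^ ℓ = 0 := by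
  have h := geom_sum_mul z n
  rw [hz, sub_self] at h
  rcases mul_eq_zero.mp h with h' | h'
  · exact h'
  · exact absurd (sub_eq_zero.mp h') h1

private lemma aux_inner_eq {F : Type*} [Field F] {n : ℕ} (y : F)
    (hy : y ^ n = 1) :
    ∑ ℓ ∈ Finset.range n, y ^ ℓ * y ^ (n - ℓ) = (n : F) := by
  have hterm : ∀ ℓ ∈ Finset.range n, y ^ ℓ * y ^ (n - ℓ) = 1 := by
    intro ℓ hℓ
    have hℓn : ℓ ≤ n := le_of_lt (Finset.mem_range.mp hℓ)
    rw [← pow_add]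
    have : ℓ + (n - ℓ) = n := by omega
    rw [this, hy]
  rw [Finset.sum_congr rfl hterm]
  simp

private lemma aux_inner_ne {F : Type*} [Field F] {n : ℕ} {x y : F}
    (hx : x ^ n = 1) (hy : y ^ n = 1) (hy0 : y ≠ 0) (hxy : x ≠ y) :
    ∑ ℓ ∈ Finset.range n, x ^ ℓ * y ^ (n - ℓ) = 0 := by
  have hterm : ∀ ℓ ∈ Finset.range n, x ^ ℓ * y ^ (n - ℓ) = (x * y⁻¹) ^ ℓ := by
    intro ℓ hℓ
    have hℓn : ℓ ≤ n := le_of_lt (Finset.mem_range.mp hℓ)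
    have h1 : y ^ ℓ * y ^ (n - ℓ) = 1 := by
      rw [← pow_add]
      have : ℓ + (n - ℓ) = n := by omega
      rw [this, hy]
    have hyinv : y ^ (n - ℓ) = (y⁻¹) ^ ℓ := by
      rw [inv_pow]
      exact eq_inv_of_mul_eq_one_left (by rw [mul_comm]; exact h1)
    rw [hyinv, mul_pow]
  rw [Finset.sum_congr rfl hterm]
  have hz1 : x * y⁻¹ ≠ 1 := by
    intro h
    apply hxy
    field_simp at h
    exact h
  have hzn : (x * y⁻¹) ^ n = 1 := by
    rw [mul_pow, hx, inv_pow, hy, inv_one, one_mul]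
  exact aux_geom_zero hzn hz1

theorem stmt19 {F : Type*} [Field F] [Fintype F] (a : F) (n α d : ℕ)
    (hn : n = Fintype.card F - 1) (ha : IsPrimitiveRoot a n)
    (hd : d = 2 * α) (hdn : d ≤ n - 1) (hgcd : Nat.gcd n α = 1)
    (G : Fin (2 * α) → Fin n → F)
    (hG : ∀ i j, G i j = if (i : ℕ) < α then (a ^ (j : ℕ)) ^ ((i : ℕ) + 1)
          else (a ^ (j : ℕ)) ^ α * (a ^ (j : ℕ)) ^ ((i : ℕ) - α + 1)) :
    ∀ c : Fin n → F, c ∈ Submodule.span F (Set.range G) ↔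
      ∀ ℓ < n - d, ∑ j, c j * (a ^ ℓ) ^ (j : ℕ) = 0 := by
  have hcard2 : 2 ≤ Fintype.card F := Fintype.one_lt_card
  have hn1 : 1 ≤ n := by omega
  have hcard : Fintype.card F = n + 1 := by omega
  have han : a ^ n = 1 := ha.pow_eq_one
  have haz : a ≠ 0 := by
    intro h
    rw [h, zero_pow (by omega)] at han
    exact zero_ne_one han
  have hnF : (n : F) = -1 := by
    have h0 : ((Fintype.card F : ℕ) : F) = 0 := Nat.cast_card_eq_zero F
    rw [hcard] at h0
    push_cast at h0
    linear_combination h0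
  -- all rows are power rows
  have hGrow : ∀ i j, G i j = (a ^ ((i : ℕ) + 1)) ^ (j : ℕ) := by
    intro i j
    rw [hG i j]
    by_cases h : (i : ℕ) < α
    · rw [if_pos h, ← pow_mul, ← pow_mul, Nat.mul_comm]
    · have hexp : α + ((i : ℕ) - α + 1) = (i : ℕ) + 1 := by omega
      rw [if_neg h, ← pow_add, hexp, ← pow_mul, ← pow_mul, Nat.mul_comm]
  -- vanishing of power-row sums
  have hrowvan : ∀ (k : ℕ), 0 < k → k < n → ∑ j : Fin n, (a ^ k) ^ (j : ℕ) = 0 := by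
    intro k hk0 hkn
    have h1 : a ^ k ≠ 1 := ha.pow_ne_one_of_pos_of_lt hk0.ne' hkn
    have hzn : (a ^ k) ^ n = 1 := by
      rw [← pow_mul, mul_comm, pow_mul, han, one_pow]
    rw [Fin.sum_univ_eq_sum_range (fun j => (a ^ k) ^ j)]
    exact aux_geom_zero hzn h1
  intro c
  constructor
  · -- forward direction
    intro hc
    let W : Submodule F (Fin n → F) :=
      { carrier := {v | ∀ ℓ < n - d, ∑ j, v j * (a ^ ℓ) ^ (j : ℕ) = 0}
        add_mem' := by
          intro x y hx hy ℓ hℓ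
          simp only [Set.mem_setOf_eq, Pi.add_apply, add_mul, Finset.sum_add_distrib] at *
          rw [hx ℓ hℓ, hy ℓ hℓ, add_zero]
        zero_mem' := by intro ℓ hℓ; simp
        smul_mem' := by
          intro r x hx ℓ hℓ
          simp only [Set.mem_setOf_eq, Pi.smul_apply, smul_eq_mul, mul_assoc,
            ← Finset.mul_sum] at *
          rw [hx ℓ hℓ, mul_zero] }
    have hsub : Set.range G ⊆ W := by
      rintro _ ⟨i, rfl⟩
      intro ℓ hℓ
      have hcalc : ∀ j : Fin n, G i j * (a ^ ℓ) ^ (j : ℕ) = (a ^ ((i : ℕ) + 1 + ℓ)) ^ (j : ℕ) := by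
        intro j
        rw [hGrow i j, ← mul_pow, ← pow_add]
      rw [Finset.sum_congr rfl (fun j _ => hcalc j)]
      have hi : (i : ℕ) < 2 * α := i.isLt
      exact hrowvan ((i : ℕ) + 1 + ℓ) (by omega) (by omega)
    exact Submodule.span_le.mpr hsub hc
  · -- backward direction: Fourier inversion
    intro h
    set chat : ℕ → F := fun ℓ => ∑ j, c j * (a ^ ℓ) ^ (j : ℕ) with hchat
    have hkey : ∀ j' : Fin n,
        ∑ ℓ ∈ Finset.range n, chat ℓ * (a ^ (j' : ℕ)) ^ (n - ℓ) = - c j' := by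
      intro j'
      have hswap :
          ∑ ℓ ∈ Finset.range n, chat ℓ * (a ^ (j' : ℕ)) ^ (n - ℓ)
            = ∑ j : Fin n, c j *
                ∑ ℓ ∈ Finset.range n, (a ^ (j : ℕ)) ^ ℓ * (a ^ (j' : ℕ)) ^ (n - ℓ) := by
        simp only [hchat, Finset.sum_mul, Finset.mul_sum]
        rw [Finset.sum_comm]
        exact Finset.sum_congr rfl fun j _ => Finset.sum_congr rfl fun ℓ _ => by ring
      rw [hswap]
      have hinner : ∀ j : Fin n,
          ∑ ℓ ∈ Finset.range n, (a ^ (j : ℕ)) ^ ℓ * (a ^ (j' : ℕ)) ^ (n - ℓ)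
            = if j = j' then (n : F) else 0 := by
        intro j
        have hx : (a ^ (j : ℕ)) ^ n = 1 := by
          rw [← pow_mul, mul_comm, pow_mul, han, one_pow]
        have hy : (a ^ (j' : ℕ)) ^ n = 1 := by
          rw [← pow_mul, mul_comm, pow_mul, han, one_pow]
        have hy0 : a ^ (j' : ℕ) ≠ 0 := pow_ne_zero _ haz
        by_cases hjj : j = j'
        · subst hjj
          rw [if_pos rfl]
          exact aux_inner_eq _ hx
        · rw [if_neg hjj]
          have hne : a ^ (j : ℕ) ≠ a ^ (j' : ℕ) := by
            intro hpow
            exact hjj (Fin.ext (ha.pow_inj j.isLt j'.isLt hpow))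
          exact aux_inner_ne hx hy hy0 hne
      rw [Finset.sum_congr rfl (fun j _ => by rw [hinner j])]
      simp only [mul_ite, mul_zero]
      rw [Finset.sum_ite_eq' Finset.univ j' (fun j => c j * (n : F))]
      simp [hnF]
    have hsplit : ∀ j' : Fin n,
        ∑ ℓ ∈ Finset.range n, chat ℓ * (a ^ (j' : ℕ)) ^ (n - ℓ)
          = ∑ i : Fin (2 * α), chat (n - ((i : ℕ) + 1)) * (a ^ (j' : ℕ)) ^ ((i : ℕ) + 1) := by
      intro j'
      have hcons : ∑ ℓ ∈ Finset.Ico 0 (n - d), chat ℓ * (a ^ (j' : ℕ)) ^ (n - ℓ)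
            + ∑ ℓ ∈ Finset.Ico (n - d) n, chat ℓ * (a ^ (j' : ℕ)) ^ (n - ℓ)
          = ∑ ℓ ∈ Finset.Ico 0 n, chat ℓ * (a ^ (j' : ℕ)) ^ (n - ℓ) :=
        Finset.sum_Ico_consecutive _ (Nat.zero_le _) (Nat.sub_le _ _)
      have h1 : ∑ ℓ ∈ Finset.Ico 0 (n - d), chat ℓ * (a ^ (j' : ℕ)) ^ (n - ℓ) = 0 := by
        rw [← Finset.range_eq_Ico]
        refine Finset.sum_eq_zero fun ℓ hℓ => ?_
        have hc0 : chat ℓ = 0 := h ℓ (Finset.mem_range.mp hℓ)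
        rw [hc0, zero_mul]
      have h2 : ∑ ℓ ∈ Finset.Ico (n - d) n, chat ℓ * (a ^ (j' : ℕ)) ^ (n - ℓ)
          = ∑ k ∈ Finset.range d, chat ((n - d) + k) * (a ^ (j' : ℕ)) ^ (n - ((n - d) + k)) := by
        rw [Finset.sum_Ico_eq_sum_range]
        have : n - (n - d) = d := by omega
        rw [this]
      have h3 : ∑ k ∈ Finset.range d, chat ((n - d) + k) * (a ^ (j' : ℕ)) ^ (n - ((n - d) + k))
          = ∑ k ∈ Finset.range d, chat ((n - d) + (d - 1 - k))
              * (a ^ (j' : ℕ)) ^ (n - ((n - d) + (d - 1 - k))) :=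
        (Finset.sum_range_reflect
          (fun k => chat ((n - d) + k) * (a ^ (j' : ℕ)) ^ (n - ((n - d) + k))) d).symm
      have h4 : ∑ k ∈ Finset.range d, chat ((n - d) + (d - 1 - k))
              * (a ^ (j' : ℕ)) ^ (n - ((n - d) + (d - 1 - k)))
          = ∑ k ∈ Finset.range (2 * α), chat (n - (k + 1)) * (a ^ (j' : ℕ)) ^ (k + 1) := by
        rw [← hd]
        refine Finset.sum_congr rfl fun k hk => ?_
        have hkd : k < d := Finset.mem_range.mp hk
        have e1 : (n - d) + (d - 1 - k) = n - (k + 1) := by omega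
        have e2 : n - (n - (k + 1)) = k + 1 := by omega
        rw [e1, e2]
      rw [Finset.range_eq_Ico, ← hcons, h1, zero_add, h2, h3, h4]
      rw [Fin.sum_univ_eq_sum_range (fun k => chat (n - (k + 1)) * (a ^ (j' : ℕ)) ^ (k + 1))]
    have hcomb : c = ∑ i : Fin (2 * α), (-(chat (n - ((i : ℕ) + 1)))) • G i := by
      funext j'
      have hthis := hkey j'
      rw [hsplit j'] at hthis
      have hcj : c j' = ∑ i : Fin (2 * α),
          (-(chat (n - ((i : ℕ) + 1)))) * (a ^ (j' : ℕ)) ^ ((i : ℕ) + 1) := by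
        calc c j' = -(-(c j')) := (neg_neg _).symm
        _ = -(∑ i : Fin (2 * α), chat (n - ((i : ℕ) + 1)) * (a ^ (j' : ℕ)) ^ ((i : ℕ) + 1)) := by
            rw [hthis]
        _ = ∑ i : Fin (2 * α),
              (-(chat (n - ((i : ℕ) + 1)))) * (a ^ (j' : ℕ)) ^ ((i : ℕ) + 1) := by
            rw [← Finset.sum_neg_distrib]
            exact Finset.sum_congr rfl fun i _ => by ring
      rw [hcj, Finset.sum_apply]
      refine Finset.sum_congr rfl fun i _ => ?_
      rw [Pi.smul_apply, smul_eq_mul, hGrow i j']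
      congr 1
      rw [← pow_mul, ← pow_mul, Nat.mul_comm]
    rw [hcomb]
    exact Submodule.sum_mem _ fun i _ =>
      Submodule.smul_mem _ _ (Submodule.subset_span ⟨i, rfl⟩)
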